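/- Linear L∞ stability of the fully discrete DF-FV method (§2.2): Consider the linear advection equation U_t + aU_x = 0 with a > 0 on a periodic mesh of N ≥ 3 cells of width Δx > 0, let θ ∈ [1,2], K ≥ 0, and let Δt > 0 satisfy the CFL condition aΔt/Δx ≤ 1/2. Suppose the data at time t satisfy |Ū_{j+1/2}(t)| ≤ K, |Ū_j(t)| ≤ K, and Ū_j(t) = ½(Ū_{j−1/2}(t) + Ū_{j+1/2}(t)) for all j ∈ ℤ/Nℤ. Then the values produced by one full step of the scheme — (i) reconstruct one-sided point values U_j^± from {Ū_{j+1/2}(t)} by the generalized minmod reconstruction with parameter θ; (ii) forward-Euler evolve Ū*_{j+1/2} = Ū_{j+1/2}(t) − (aΔt/Δx)(U⁻_{j+1} − U⁻_j) and Ū*_j = Ū_j(t) − (aΔt/Δx)(Ū_{j+1/2}(t) − Ū_{j−1/2}(t)); (iii) apply the 1-D post-processing to {Ū*_j} and {Ū*_{j+1/2}} to obtain Ū_{j+1/2}(t+Δt) and Ū_j(t+Δt) — satisfy |Ū_{j+1/2}(t+Δt)| ≤ K and |Ū_j(t+Δt)| ≤ K for all j ∈ ℤ/Nℤ. -/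

import Mathlib

/-- The minmod function of two real numbers. -/
noncomputable def minmod2 (c₁ c₂ : ℝ) : ℝ :=
  if 0 < c₁ ∧ 0 < c₂ then min c₁ c₂
  else if c₁ < 0 ∧ c₂ < 0 then max c₁ c₂
  else 0

/-- The minmod function of three real numbers. -/
noncomputable def minmod3 (c₁ c₂ c₃ : ℝ) : ℝ :=
  if 0 < c₁ ∧ 0 < c₂ ∧ 0 < c₃ then min c₁ (min c₂ c₃)
  else if c₁ < 0 ∧ c₂ < 0 ∧ c₃ < 0 then max c₁ (max c₂ c₃)
  else 0

/-- Generalized minmod slope `σ_{j+1/2}` of the staggered averages `Uh j = Ū_{j+1/2}`: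
`σ_{j+1/2} = minmod(θ(Ū_{j+1/2} − Ū_{j−1/2})/Δx, (Ū_{j+3/2} − Ū_{j−1/2})/(2Δx),
θ(Ū_{j+3/2} − Ū_{j+1/2})/Δx)` (periodic indexing by `ZMod N`). -/
noncomputable def recSlope {N : ℕ} (Δx θ : ℝ) (Uh : ZMod N → ℝ) (j : ZMod N) : ℝ :=
  minmod3 (θ * (Uh j - Uh (j - 1)) / Δx) ((Uh (j + 1) - Uh (j - 1)) / (2 * Δx))
    (θ * (Uh (j + 1) - Uh j) / Δx)

/-- Reconstructed point value `U_j^+ = Ū_{j+1/2} − (Δx/2)σ_{j+1/2}`. -/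
noncomputable def recUplus {N : ℕ} (Δx θ : ℝ) (Uh : ZMod N → ℝ) (j : ZMod N) : ℝ :=
  Uh j - Δx / 2 * recSlope Δx θ Uh j

/-- Reconstructed point value `U_j^− = Ū_{j−1/2} + (Δx/2)σ_{j−1/2}`. -/
noncomputable def recUminus {N : ℕ} (Δx θ : ℝ) (Uh : ZMod N → ℝ) (j : ZMod N) : ℝ :=
  Uh (j - 1) + Δx / 2 * recSlope Δx θ Uh (j - 1)

/-- Forward-Euler evolution of the staggered average:
`Ū*_{j+1/2} = Ū_{j+1/2} − ν(U⁻_{j+1} − U⁻_j)` with `ν = aΔt/Δx`. -/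
noncomputable def evolveStag {N : ℕ} (Δx θ ν : ℝ) (Uh : ZMod N → ℝ) (j : ZMod N) : ℝ :=
  Uh j - ν * (recUminus Δx θ Uh (j + 1) - recUminus Δx θ Uh j)

/-- Forward-Euler evolution of the primal average:
`Ū*_j = Ū_j − ν(Ū_{j+1/2} − Ū_{j−1/2})` with `ν = aΔt/Δx`. -/
noncomputable def evolvePrim {N : ℕ} (ν : ℝ) (Uh Uc : ZMod N → ℝ) (j : ZMod N) : ℝ :=
  Uc j - ν * (Uh j - Uh (j - 1))

/-- Post-processing slope `(U_x)*_j = 2·minmod((Ū*_j − Ū*_{j−1/2})/Δx, (Ū*_{j+1/2} − Ū*_j)/Δx)`,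
where `Ubar j = Ū*_j` and `Uhalf j = Ū*_{j+1/2}`. -/
noncomputable def ppSlope {N : ℕ} (Δx : ℝ) (Ubar Uhalf : ZMod N → ℝ) (j : ZMod N) : ℝ :=
  2 * minmod2 ((Ubar j - Uhalf (j - 1)) / Δx) ((Uhalf j - Ubar j) / Δx)

/-- Post-processed staggered average
`Ū_{j+1/2}(t+Δt) = ½(U^{*,−}_{j+1/2} + U^{*,+}_{j+1/2})` with
`U^{*,−}_{j+1/2} = Ū*_j + (Δx/2)(U_x)*_j` and `U^{*,+}_{j+1/2} = Ū*_{j+1} − (Δx/2)(U_x)*_{j+1}`. -/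
noncomputable def ppStag {N : ℕ} (Δx : ℝ) (Ubar Uhalf : ZMod N → ℝ) (j : ZMod N) : ℝ :=
  ((Ubar j + Δx / 2 * ppSlope Δx Ubar Uhalf j) +
    (Ubar (j + 1) - Δx / 2 * ppSlope Δx Ubar Uhalf (j + 1))) / 2

/-- Post-processed primal average `Ū_j(t+Δt) = ½(Ū_{j−1/2}(t+Δt) + Ū_{j+1/2}(t+Δt))`. -/
noncomputable def ppPrim {N : ℕ} (Δx : ℝ) (Ubar Uhalf : ZMod N → ℝ) (j : ZMod N) : ℝ :=
  (ppStag Δx Ubar Uhalf (j - 1) + ppStag Δx Ubar Uhalf j) / 2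

lemma mm2_bd1 (c₁ c₂ : ℝ) : min 0 c₁ ≤ minmod2 c₁ c₂ ∧ minmod2 c₁ c₂ ≤ max 0 c₁ := by
  unfold minmod2
  split_ifs with h h'
  · exact ⟨le_trans (min_le_left 0 c₁) (le_min h.1.le h.2.le),
      le_trans (min_le_left c₁ c₂) (le_max_right 0 c₁)⟩
  · exact ⟨le_trans (min_le_right 0 c₁) (le_max_left c₁ c₂),
      le_trans (max_le h'.1.le h'.2.le) (le_max_left 0 c₁)⟩
  · exact ⟨min_le_left 0 c₁, le_max_left 0 c₁⟩

lemma mm2_bd2 (c₁ c₂ : ℝ) : min 0 c₂ ≤ minmod2 c₁ c₂ ∧ minmod2 c₁ c₂ ≤ max 0 c₂ := by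
  unfold minmod2
  split_ifs with h h'
  · exact ⟨le_trans (min_le_left 0 c₂) (le_min h.1.le h.2.le),
      le_trans (min_le_right c₁ c₂) (le_max_right 0 c₂)⟩
  · exact ⟨le_trans (min_le_right 0 c₂) (le_max_right c₁ c₂),
      le_trans (max_le h'.1.le h'.2.le) (le_max_left 0 c₂)⟩
  · exact ⟨min_le_left 0 c₂, le_max_left 0 c₂⟩

lemma mm3_bd1 (c₁ c₂ c₃ : ℝ) :
    min 0 c₁ ≤ minmod3 c₁ c₂ c₃ ∧ minmod3 c₁ c₂ c₃ ≤ max 0 c₁ := by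
  unfold minmod3
  split_ifs with h h'
  · exact ⟨le_trans (min_le_left 0 c₁) (le_min h.1.le (le_min h.2.1.le h.2.2.le)),
      le_trans (min_le_left _ _) (le_max_right 0 c₁)⟩
  · exact ⟨le_trans (min_le_right 0 c₁) (le_max_left _ _),
      le_trans (max_le h'.1.le (max_le h'.2.1.le h'.2.2.le)) (le_max_left 0 c₁)⟩
  · exact ⟨min_le_left 0 c₁, le_max_left 0 c₁⟩

lemma mm3_bd3 (c₁ c₂ c₃ : ℝ) :
    min 0 c₃ ≤ minmod3 c₁ c₂ c₃ ∧ minmod3 c₁ c₂ c₃ ≤ max 0 c₃ := by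
  unfold minmod3
  split_ifs with h h'
  · exact ⟨le_trans (min_le_left 0 c₃) (le_min h.1.le (le_min h.2.1.le h.2.2.le)),
      le_trans (le_trans (min_le_right _ _) (min_le_right _ _)) (le_max_right 0 c₃)⟩
  · exact ⟨le_trans (min_le_right 0 c₃) (le_trans (le_max_right c₂ c₃) (le_max_right c₁ _)),
      le_trans (max_le h'.1.le (max_le h'.2.1.le h'.2.2.le)) (le_max_left 0 c₃)⟩
  · exact ⟨min_le_left 0 c₃, le_max_left 0 c₃⟩

lemma betw (K x v e : ℝ) (hx : |x| ≤ K) (hv : |v| ≤ K)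
    (h1 : min 0 (v - x) ≤ e) (h2 : e ≤ max 0 (v - x)) : |x + e| ≤ K := by
  rw [abs_le] at hx hv ⊢
  rcases le_total 0 (v - x) with h | h
  · rw [min_eq_left h] at h1; rw [max_eq_right h] at h2
    constructor <;> linarith
  · rw [min_eq_right h] at h1; rw [max_eq_left h] at h2
    constructor <;> linarith

lemma betw' (K x v e : ℝ) (hx : |x| ≤ K) (hv : |v| ≤ K)
    (h1 : min 0 (x - v) ≤ e) (h2 : e ≤ max 0 (x - v)) : |x - e| ≤ K := by
  rw [abs_le] at hx hv ⊢
  rcases le_total 0 (x - v) with h | h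
  · rw [min_eq_left h] at h1; rw [max_eq_right h] at h2
    constructor <;> linarith
  · rw [min_eq_right h] at h1; rw [max_eq_left h] at h2
    constructor <;> linarith

lemma scale_bound (Δx e c : ℝ) (hΔx : 0 < Δx)
    (h1 : min 0 (c / Δx) ≤ e) (h2 : e ≤ max 0 (c / Δx)) :
    min 0 c ≤ Δx * e ∧ Δx * e ≤ max 0 c := by
  rcases le_total 0 c with hc | hc
  · have hcd : 0 ≤ c / Δx := div_nonneg hc hΔx.le
    rw [min_eq_left hcd] at h1; rw [max_eq_right hcd] at h2
    have h3 : Δx * e ≤ Δx * (c / Δx) := by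
      exact mul_le_mul_of_nonneg_left h2 hΔx.le
    rw [mul_div_cancel₀ c hΔx.ne'] at h3
    exact ⟨by rw [min_eq_left hc]; exact mul_nonneg hΔx.le h1,
      by rw [max_eq_right hc]; exact h3⟩
  · have hcd : c / Δx ≤ 0 := div_nonpos_of_nonpos_of_nonneg hc hΔx.le
    rw [min_eq_right hcd] at h1; rw [max_eq_left hcd] at h2
    have h3 : Δx * (c / Δx) ≤ Δx * e := mul_le_mul_of_nonneg_left h1 hΔx.le
    rw [mul_div_cancel₀ c hΔx.ne'] at h3
    exact ⟨by rw [min_eq_right hc]; exact h3,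
      by rw [max_eq_left hc]; exact mul_nonpos_of_nonneg_of_nonpos hΔx.le h2⟩

lemma scale_boundθ (Δx θ e d : ℝ) (hΔx : 0 < Δx) (hθ0 : 0 ≤ θ) (hθ2 : θ ≤ 2)
    (h1 : min 0 (θ * d / Δx) ≤ e) (h2 : e ≤ max 0 (θ * d / Δx)) :
    min 0 d ≤ Δx / 2 * e ∧ Δx / 2 * e ≤ max 0 d := by
  rcases le_total 0 d with hd | hd
  · have hcd : 0 ≤ θ * d / Δx := div_nonneg (mul_nonneg hθ0 hd) hΔx.le
    rw [min_eq_left hcd] at h1; rw [max_eq_right hcd] at h2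
    have h3 : Δx / 2 * e ≤ Δx / 2 * (θ * d / Δx) :=
      mul_le_mul_of_nonneg_left h2 (by positivity)
    have h4 : Δx / 2 * (θ * d / Δx) = θ * d / 2 := by field_simp
    rw [h4] at h3
    exact ⟨by rw [min_eq_left hd]; exact mul_nonneg (by positivity) h1,
      by rw [max_eq_right hd]; nlinarith⟩
  · have hcd : θ * d / Δx ≤ 0 :=
      div_nonpos_of_nonpos_of_nonneg (mul_nonpos_of_nonneg_of_nonpos hθ0 hd) hΔx.le
    rw [min_eq_right hcd] at h1; rw [max_eq_left hcd] at h2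
    have h3 : Δx / 2 * (θ * d / Δx) ≤ Δx / 2 * e :=
      mul_le_mul_of_nonneg_left h1 (by positivity)
    have h4 : Δx / 2 * (θ * d / Δx) = θ * d / 2 := by field_simp
    rw [h4] at h3
    exact ⟨by rw [min_eq_right hd]; nlinarith,
      by rw [max_eq_left hd]; exact mul_nonpos_of_nonneg_of_nonpos (by positivity) h2⟩

set_option maxHeartbeats 1600000 in
/-- Linear L∞ stability of the fully discrete DF-FV method for `U_t + aU_x = 0`, `a > 0`:
under the CFL condition `aΔt/Δx ≤ 1/2`, if the data at time `t` satisfy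
`|Ū_{j+1/2}(t)| ≤ K`, `|Ū_j(t)| ≤ K` and `Ū_j(t) = ½(Ū_{j−1/2}(t) + Ū_{j+1/2}(t))`,
then one full step of the scheme (minmod reconstruction with parameter `θ ∈ [1,2]`,
forward-Euler evolution, and post-processing) produces values bounded by `K`. -/
theorem DFFV_linear_Linfty_stability (N : ℕ) (hN : 3 ≤ N)
    (a Δx Δt θ K : ℝ) (ha : 0 < a) (hΔx : 0 < Δx) (hΔt : 0 < Δt)
    (hθ : θ ∈ Set.Icc (1 : ℝ) 2) (hK : 0 ≤ K) (hCFL : a * Δt / Δx ≤ 1 / 2)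
    (Uh Uc : ZMod N → ℝ)
    (hUh : ∀ j, |Uh j| ≤ K) (hUc : ∀ j, |Uc j| ≤ K)
    (hrel : ∀ j, Uc j = (Uh (j - 1) + Uh j) / 2) :
    ∀ j : ZMod N,
      |ppStag Δx (evolvePrim (a * Δt / Δx) Uh Uc) (evolveStag Δx θ (a * Δt / Δx) Uh) j| ≤ K ∧
      |ppPrim Δx (evolvePrim (a * Δt / Δx) Uh Uc) (evolveStag Δx θ (a * Δt / Δx) Uh) j| ≤ K := by
  obtain ⟨hθ1, hθ2⟩ := hθ
  set ν := a * Δt / Δx with hνdef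
  have hν0 : 0 < ν := div_pos (mul_pos ha hΔt) hΔx
  have hν2 : ν ≤ 1 / 2 := hCFL
  -- evolved primal averages stay bounded
  have hEP : ∀ j, |evolvePrim ν Uh Uc j| ≤ K := by
    intro j
    unfold evolvePrim
    rw [hrel j]
    have h1 := abs_le.mp (hUh j)
    have h2 := abs_le.mp (hUh (j - 1))
    rw [abs_le]
    constructor <;>
      nlinarith [mul_nonneg (by linarith : (0:ℝ) ≤ 1/2 - ν) (by linarith : 0 ≤ K - Uh j),
        mul_nonneg (by linarith : (0:ℝ) ≤ 1/2 + ν) (by linarith : 0 ≤ K - Uh (j-1)),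
        mul_nonneg (by linarith : (0:ℝ) ≤ 1/2 - ν) (by linarith : 0 ≤ K + Uh j),
        mul_nonneg (by linarith : (0:ℝ) ≤ 1/2 + ν) (by linarith : 0 ≤ K + Uh (j-1))]
  -- evolved staggered averages stay bounded
  have hES : ∀ j, |evolveStag Δx θ ν Uh j| ≤ K := by
    intro j
    unfold evolveStag recUminus
    rw [show (j + 1 - 1 : ZMod N) = j from add_sub_cancel_right j 1]
    set d := Uh j - Uh (j - 1) with hd
    have hX : min 0 d ≤ Δx / 2 * recSlope Δx θ Uh j ∧
        Δx / 2 * recSlope Δx θ Uh j ≤ max 0 d := by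
      unfold recSlope
      have h := mm3_bd1 (θ * (Uh j - Uh (j - 1)) / Δx)
        ((Uh (j + 1) - Uh (j - 1)) / (2 * Δx)) (θ * (Uh (j + 1) - Uh j) / Δx)
      rw [← hd] at h
      exact scale_boundθ Δx θ _ d hΔx (by linarith) hθ2 h.1 h.2
    have hY : min 0 d ≤ Δx / 2 * recSlope Δx θ Uh (j - 1) ∧
        Δx / 2 * recSlope Δx θ Uh (j - 1) ≤ max 0 d := by
      unfold recSlope
      rw [show (j - 1 + 1 : ZMod N) = j from sub_add_cancel j 1]
      have h := mm3_bd3 (θ * (Uh (j - 1) - Uh (j - 1 - 1)) / Δx)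
        ((Uh j - Uh (j - 1 - 1)) / (2 * Δx)) (θ * (Uh j - Uh (j - 1)) / Δx)
      rw [← hd] at h
      exact scale_boundθ Δx θ _ d hΔx (by linarith) hθ2 h.1 h.2
    set X := Δx / 2 * recSlope Δx θ Uh j
    set Y := Δx / 2 * recSlope Δx θ Uh (j - 1)
    have h1 := abs_le.mp (hUh j)
    have h2 := abs_le.mp (hUh (j - 1))
    rw [abs_le]
    rcases le_total 0 d with hdd | hdd
    · rw [min_eq_left hdd] at hX hY
      rw [max_eq_right hdd] at hX hY
      constructor
      · nlinarith [mul_nonneg hν0.le (by linarith : (0:ℝ) ≤ d + X - Y)]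
      · nlinarith [mul_nonneg hν0.le (by linarith : (0:ℝ) ≤ 2 * d - (d + X - Y)),
          mul_nonneg (by linarith : (0:ℝ) ≤ 1/2 - ν) (by linarith : (0:ℝ) ≤ 2 * d)]
    · rw [min_eq_right hdd] at hX hY
      rw [max_eq_left hdd] at hX hY
      constructor
      · nlinarith [mul_nonneg hν0.le (by linarith : (0:ℝ) ≤ (d + X - Y) - 2 * d),
          mul_nonneg (by linarith : (0:ℝ) ≤ 1/2 - ν) (by linarith : (0:ℝ) ≤ -(2 * d))]
      · nlinarith [mul_nonneg hν0.le (by linarith : (0:ℝ) ≤ -(d + X - Y))]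
  set Ub := evolvePrim ν Uh Uc with hUb
  set Uf := evolveStag Δx θ ν Uh with hUf
  -- post-processed staggered values stay bounded
  have hPS : ∀ j, |ppStag Δx Ub Uf j| ≤ K := by
    intro j
    have hA : |Ub j + Δx / 2 * ppSlope Δx Ub Uf j| ≤ K := by
      unfold ppSlope
      rw [show Δx / 2 * (2 * minmod2 ((Ub j - Uf (j - 1)) / Δx) ((Uf j - Ub j) / Δx))
          = Δx * minmod2 ((Ub j - Uf (j - 1)) / Δx) ((Uf j - Ub j) / Δx) from by ring]
      have h := mm2_bd2 ((Ub j - Uf (j - 1)) / Δx) ((Uf j - Ub j) / Δx)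
      have hs := scale_bound Δx _ (Uf j - Ub j) hΔx h.1 h.2
      exact betw K (Ub j) (Uf j) _ (hEP j) (hES j) hs.1 hs.2
    have hB : |Ub (j + 1) - Δx / 2 * ppSlope Δx Ub Uf (j + 1)| ≤ K := by
      unfold ppSlope
      rw [show (j + 1 - 1 : ZMod N) = j from add_sub_cancel_right j 1]
      rw [show Δx / 2 * (2 * minmod2 ((Ub (j + 1) - Uf j) / Δx) ((Uf (j + 1) - Ub (j + 1)) / Δx))
          = Δx * minmod2 ((Ub (j + 1) - Uf j) / Δx) ((Uf (j + 1) - Ub (j + 1)) / Δx) from by ring]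
      have h := mm2_bd1 ((Ub (j + 1) - Uf j) / Δx) ((Uf (j + 1) - Ub (j + 1)) / Δx)
      have hs := scale_bound Δx _ (Ub (j + 1) - Uf j) hΔx h.1 h.2
      exact betw' K (Ub (j + 1)) (Uf j) _ (hEP (j + 1)) (hES j) hs.1 hs.2
    unfold ppStag
    have hA' := abs_le.mp hA
    have hB' := abs_le.mp hB
    rw [abs_le]
    constructor <;> linarith
  intro j
  refine ⟨hPS j, ?_⟩
  unfold ppPrim
  have h1 := abs_le.mp (hPS (j - 1))
  have h2 := abs_le.mp (hPS j)
  rw [abs_le]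
  constructor <;> linarith
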